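/- Let f_O be the twisting function of O_n as above and let φ := δ f_O, i.e. φ(x,y,z) = f_O(x,y) + f_O(x,y+z) + f_O(x+y,z) + f_O(y,z). Then φ(x,y,z) = α_n(x+y+z) + α_n(x+y) + α_n(x+z) + α_n(y+z) + α_n(x) + α_n(y) + α_n(z) for all x,y,z ∈ (Z/2)^n, where α_n(x) = Σ_{i<j<k} x_i x_j x_k + Σ_{i<j} x_i x_j + Σ_i x_i. In particular φ is symmetric in its three arguments. -/
import Mathlib

/-- The twisting function `f_O` of the algebra `O_n`. -/
def twistO (n : ℕ) (x y : Fin n → ZMod 2) : ZMod 2 :=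
  (∑ t ∈ Finset.univ.filter
      (fun t : Fin n × Fin n × Fin n => t.1 < t.2.1 ∧ t.2.1 < t.2.2),
      (x t.1 * x t.2.1 * y t.2.2 + x t.1 * y t.2.1 * x t.2.2
        + y t.1 * x t.2.1 * x t.2.2))
  + ∑ t ∈ Finset.univ.filter (fun t : Fin n × Fin n => t.1 ≤ t.2),
      x t.1 * y t.2

/-- The cubic form `α_n`. -/
def cubicFormOn (n : ℕ) (x : Fin n → ZMod 2) : ZMod 2 :=
  (∑ t ∈ Finset.univ.filter
      (fun t : Fin n × Fin n × Fin n => t.1 < t.2.1 ∧ t.2.1 < t.2.2),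
      x t.1 * x t.2.1 * x t.2.2)
  + (∑ t ∈ Finset.univ.filter (fun t : Fin n × Fin n => t.1 < t.2),
      x t.1 * x t.2)
  + ∑ i, x i

lemma trip_aux (a b c d e f g h i : ZMod 2) :
    (a*b*f + a*e*c + d*b*c)
    + (a*b*(f+i) + a*(e+h)*c + (d+g)*b*c)
    + ((a+d)*(b+e)*i + (a+d)*h*(c+f) + g*(b+e)*(c+f))
    + (d*e*i + d*h*f + g*e*f)
    = (a+d+g)*(b+e+h)*(c+f+i) + (a+d)*(b+e)*(c+f) + (a+g)*(b+h)*(c+i)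
      + (d+g)*(e+h)*(f+i) + a*b*c + d*e*f + g*h*i := by revert a b c d e f g h i; decide

lemma pairL_aux (a d e g h : ZMod 2) :
    a*e + a*(e+h) + (a+d)*h + d*h = 0 := by revert a d e g h; decide

lemma pairR_aux (a b d e g h : ZMod 2) :
    (a+d+g)*(b+e+h) + (a+d)*(b+e) + (a+g)*(b+h) + (d+g)*(e+h) + a*b + d*e + g*h = 0 := by
  revert a b d e g h; decide

lemma lin_aux (a d g : ZMod 2) :
    (a+d+g) + (a+d) + (a+g) + (d+g) + a + d + g = 0 := by revert a d g; decide

/-- the coboundary `φ = δ f_O` equals the third polarization of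
`α_n`; in particular `φ` is symmetric in its three arguments. -/
theorem stmt_12 (n : ℕ) :
    let φ : (Fin n → ZMod 2) → (Fin n → ZMod 2) → (Fin n → ZMod 2) → ZMod 2 :=
      fun x y z =>
        twistO n x y + twistO n x (y + z) + twistO n (x + y) z + twistO n y z
    (∀ x y z : Fin n → ZMod 2,
      φ x y z = cubicFormOn n (x + y + z) + cubicFormOn n (x + y)
        + cubicFormOn n (x + z) + cubicFormOn n (y + z)
        + cubicFormOn n x + cubicFormOn n y + cubicFormOn n z) ∧
    (∀ x y z : Fin n → ZMod 2, φ x y z = φ y x z ∧ φ x y z = φ x z y) := by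
  intro φ
  have h1 : ∀ x y z : Fin n → ZMod 2,
      φ x y z = cubicFormOn n (x + y + z) + cubicFormOn n (x + y)
        + cubicFormOn n (x + z) + cubicFormOn n (y + z)
        + cubicFormOn n x + cubicFormOn n y + cubicFormOn n z := by
    intro x y z
    show twistO n x y + twistO n x (y + z) + twistO n (x + y) z + twistO n y z = _
    simp only [twistO, cubicFormOn, Pi.add_apply]
    set S3 := Finset.univ.filter
      (fun t : Fin n × Fin n × Fin n => t.1 < t.2.1 ∧ t.2.1 < t.2.2) with hS3
    set S2 := Finset.univ.filter (fun t : Fin n × Fin n => t.1 ≤ t.2) with hS2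
    set S2' := Finset.univ.filter (fun t : Fin n × Fin n => t.1 < t.2) with hS2'
    have hT :
        (∑ t ∈ S3, (x t.1 * x t.2.1 * y t.2.2 + x t.1 * y t.2.1 * x t.2.2
            + y t.1 * x t.2.1 * x t.2.2))
        + (∑ t ∈ S3, (x t.1 * x t.2.1 * (y t.2.2 + z t.2.2)
            + x t.1 * (y t.2.1 + z t.2.1) * x t.2.2
            + (y t.1 + z t.1) * x t.2.1 * x t.2.2))
        + (∑ t ∈ S3, ((x t.1 + y t.1) * (x t.2.1 + y t.2.1) * z t.2.2
            + (x t.1 + y t.1) * z t.2.1 * (x t.2.2 + y t.2.2)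
            + z t.1 * (x t.2.1 + y t.2.1) * (x t.2.2 + y t.2.2)))
        + (∑ t ∈ S3, (y t.1 * y t.2.1 * z t.2.2 + y t.1 * z t.2.1 * y t.2.2
            + z t.1 * y t.2.1 * y t.2.2))
        = (∑ t ∈ S3, (x t.1 + y t.1 + z t.1) * (x t.2.1 + y t.2.1 + z t.2.1)
              * (x t.2.2 + y t.2.2 + z t.2.2))
          + (∑ t ∈ S3, (x t.1 + y t.1) * (x t.2.1 + y t.2.1) * (x t.2.2 + y t.2.2))
          + (∑ t ∈ S3, (x t.1 + z t.1) * (x t.2.1 + z t.2.1) * (x t.2.2 + z t.2.2))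
          + (∑ t ∈ S3, (y t.1 + z t.1) * (y t.2.1 + z t.2.1) * (y t.2.2 + z t.2.2))
          + (∑ t ∈ S3, x t.1 * x t.2.1 * x t.2.2)
          + (∑ t ∈ S3, y t.1 * y t.2.1 * y t.2.2)
          + (∑ t ∈ S3, z t.1 * z t.2.1 * z t.2.2) := by
      rw [← Finset.sum_add_distrib, ← Finset.sum_add_distrib, ← Finset.sum_add_distrib,
        ← Finset.sum_add_distrib, ← Finset.sum_add_distrib, ← Finset.sum_add_distrib,
        ← Finset.sum_add_distrib, ← Finset.sum_add_distrib, ← Finset.sum_add_distrib]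
      exact Finset.sum_congr rfl fun t _ =>
        trip_aux (x t.1) (x t.2.1) (x t.2.2) (y t.1) (y t.2.1) (y t.2.2)
          (z t.1) (z t.2.1) (z t.2.2)
    have hP :
        (∑ t ∈ S2, x t.1 * y t.2)
        + (∑ t ∈ S2, x t.1 * (y t.2 + z t.2))
        + (∑ t ∈ S2, (x t.1 + y t.1) * z t.2)
        + (∑ t ∈ S2, y t.1 * z t.2) = 0 := by
      rw [← Finset.sum_add_distrib, ← Finset.sum_add_distrib, ← Finset.sum_add_distrib]
      exact Finset.sum_eq_zero fun t _ =>
        pairL_aux (x t.1) (y t.1) (y t.2) (z t.1) (z t.2)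
    have hP' :
        (∑ t ∈ S2', (x t.1 + y t.1 + z t.1) * (x t.2 + y t.2 + z t.2))
        + (∑ t ∈ S2', (x t.1 + y t.1) * (x t.2 + y t.2))
        + (∑ t ∈ S2', (x t.1 + z t.1) * (x t.2 + z t.2))
        + (∑ t ∈ S2', (y t.1 + z t.1) * (y t.2 + z t.2))
        + (∑ t ∈ S2', x t.1 * x t.2)
        + (∑ t ∈ S2', y t.1 * y t.2)
        + (∑ t ∈ S2', z t.1 * z t.2) = 0 := by
      rw [← Finset.sum_add_distrib, ← Finset.sum_add_distrib, ← Finset.sum_add_distrib,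
        ← Finset.sum_add_distrib, ← Finset.sum_add_distrib, ← Finset.sum_add_distrib]
      exact Finset.sum_eq_zero fun t _ =>
        pairR_aux (x t.1) (x t.2) (y t.1) (y t.2) (z t.1) (z t.2)
    have hL :
        (∑ i, (x i + y i + z i)) + (∑ i, (x i + y i)) + (∑ i, (x i + z i))
        + (∑ i, (y i + z i)) + (∑ i, x i) + (∑ i, y i) + (∑ i, z i) = 0 := by
      rw [← Finset.sum_add_distrib, ← Finset.sum_add_distrib, ← Finset.sum_add_distrib,
        ← Finset.sum_add_distrib, ← Finset.sum_add_distrib, ← Finset.sum_add_distrib]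
      exact Finset.sum_eq_zero fun i _ => lin_aux (x i) (y i) (z i)
    linear_combination hT + hP - hP' - hL
  refine ⟨h1, fun x y z => ⟨?_, ?_⟩⟩
  · rw [h1, h1, add_comm y x]; ring
  · rw [h1, h1, add_comm z y, add_right_comm x z y]; ring
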